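/- arXiv:1107.1078 — 3 statements merged into one kernel-verified Lean document; each statement's English description precedes it below -/
import Mathlib

section
/- Suppose Ω is compact and the market (f, S) is arbitrage-free, and let H : Ω → ℝ be a continuous nonnegative claim. Then the price of the cheapest superhedge for H equals the least upper bound of the set of no-arbitrage prices of H: inf{ π·f : π is a superhedge for H } = sup{ ∫ H dP : P is a full support martingale measure for (f, S) }. -/
open MeasureTheory Filter Topology

variable {Ω : Type*}

section Defs

variable [TopologicalSpace Ω] [MeasurableSpace Ω]

/-- A portfolio `π` is an arbitrage for the market `(f, S)`:
nonpositive cost, nonnegative payoff everywhere, strictly positive payoff somewhere. -/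
def IsArbitrage {D : ℕ} (f : Fin (D + 1) → ℝ) (S : Fin (D + 1) → C(Ω, ℝ))
    (π : Fin (D + 1) → ℝ) : Prop :=
  (∑ d, π d * f d) ≤ 0 ∧ (∀ ω : Ω, 0 ≤ ∑ d, π d * S d ω) ∧ (∃ ω : Ω, 0 < ∑ d, π d * S d ω)

/-- The market `(f, S)` is arbitrage-free. -/
def ArbitrageFree {D : ℕ} (f : Fin (D + 1) → ℝ) (S : Fin (D + 1) → C(Ω, ℝ)) : Prop :=
  ¬ ∃ π : Fin (D + 1) → ℝ, IsArbitrage f S π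

/-- A measure has full support: every nonempty open set has positive measure. -/
def HasFullSupport (P : Measure Ω) : Prop :=
  ∀ U : Set Ω, IsOpen U → U.Nonempty → 0 < P U

/-- A martingale measure for the market `(f, S)`: a Borel probability measure under which
every asset payoff is integrable with expectation equal to its time-0 price. -/
def IsMartingaleMeasure {D : ℕ} (f : Fin (D + 1) → ℝ) (S : Fin (D + 1) → C(Ω, ℝ))
    (P : Measure Ω) : Prop :=
  IsProbabilityMeasure P ∧ ∀ d, Integrable (S d) P ∧ (∫ ω, S d ω ∂P) = f d

/-- A portfolio `π` is a superhedge for the claim `H`. -/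
def IsSuperhedge {D : ℕ} (S : Fin (D + 1) → C(Ω, ℝ)) (H : C(Ω, ℝ))
    (π : Fin (D + 1) → ℝ) : Prop :=
  ∀ ω : Ω, H ω ≤ ∑ d, π d * S d ω

/-- A portfolio `π` is a subhedge for the claim `H`. -/
def IsSubhedge {D : ℕ} (S : Fin (D + 1) → C(Ω, ℝ)) (H : C(Ω, ℝ))
    (π : Fin (D + 1) → ℝ) : Prop :=
  ∀ ω : Ω, (∑ d, π d * S d ω) ≤ H ω

end Defs


open scoped ENNReal RealInnerProductSpace
set_option linter.unusedSectionVars false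
set_option maxHeartbeats 1000000

section AuxHull

private lemma padded_sum_eq {α : Type*} {M : Type*} [AddCommMonoid M] (t : Finset α) {k : ℕ}
    (hcard : t.card ≤ k) (σ : Fin t.card ≃ {x // x ∈ t}) (G : α → M) :
    (∑ i : Fin k, if h : (i : ℕ) < t.card then G (σ ⟨i, h⟩) else 0) = ∑ y ∈ t, G y := by
  rw [Fin.sum_univ_eq_sum_range (fun m => if h : m < t.card then G (σ ⟨m, h⟩) else 0) k]
  rw [← Finset.sum_subset (Finset.range_subset_range.2 hcard)
    (fun m _ hm => by rw [dif_neg (by simpa using hm)])]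
  rw [← Fin.sum_univ_eq_sum_range (fun m => if h : m < t.card then G (σ ⟨m, h⟩) else 0) t.card]
  have h1 : ∀ j : Fin t.card, (if h : (j : ℕ) < t.card then G (σ ⟨j, h⟩) else 0) = G (σ j) := by
    intro j; rw [dif_pos j.2]
  rw [Finset.sum_congr rfl fun j _ => h1 j]
  rw [Equiv.sum_comp σ (fun a => G ↑a)]
  exact Finset.sum_coe_sort t G

private lemma isCompact_convexHull_of_isCompact {E : Type*} [NormedAddCommGroup E]
    [NormedSpace ℝ E] [FiniteDimensional ℝ E] {T : Set E} (hT : IsCompact T) :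
    IsCompact (convexHull ℝ T) := by
  rcases T.eq_empty_or_nonempty with rfl | hTne
  · simp
  set k := Module.finrank ℝ E + 1 with hk
  have himg : convexHull ℝ T =
      (fun p : (Fin k → ℝ) × (Fin k → E) => ∑ i, p.1 i • p.2 i) ''
        ((stdSimplex ℝ (Fin k)) ×ˢ Set.univ.pi fun _ => T) := by
    apply Set.Subset.antisymm
    · intro x hx
      rw [convexHull_eq_union] at hx
      obtain ⟨t, hmem⟩ := Set.mem_iUnion.1 hx
      obtain ⟨htT, hmem⟩ := Set.mem_iUnion.1 hmem
      obtain ⟨hai, hxt⟩ := Set.mem_iUnion.1 hmem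
      have htne : t.Nonempty := by
        by_contra h
        rw [Finset.not_nonempty_iff_eq_empty] at h
        subst h
        simp at hxt
      obtain ⟨y₀, hy₀⟩ := htne
      have hcard : t.card ≤ k := by
        have h1 := hai.card_le_finrank_succ
        have h2 : Module.finrank ℝ ↥(vectorSpan ℝ (Set.range (Subtype.val : t → E)))
            ≤ Module.finrank ℝ E := Submodule.finrank_le _
        simp only [Fintype.card_coe] at h1
        omega
      rw [Finset.convexHull_eq] at hxt
      obtain ⟨w, hw₀, hw₁, hwx⟩ := hxt
      set σ : Fin t.card ≃ {x // x ∈ t} := t.equivFin.symm with hσ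
      set W : Fin k → ℝ := fun i => if h : (i : ℕ) < t.card then w (σ ⟨i, h⟩) else 0 with hW
      set Z : Fin k → E := fun i => if h : (i : ℕ) < t.card then (σ ⟨i, h⟩ : E) else y₀ with hZ
      refine ⟨⟨W, Z⟩, ⟨⟨fun i => ?_, ?_⟩, fun i _ => ?_⟩, ?_⟩
      · by_cases h : (i : ℕ) < t.card
        · simp only [hW, dif_pos h]; exact hw₀ _ (σ ⟨i, h⟩).2
        · simp only [hW, dif_neg h]; exact le_refl 0
      · have := padded_sum_eq t hcard σ w
        simpa [hW] using this.trans hw₁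
      · by_cases h : (i : ℕ) < t.card
        · simp only [hZ, dif_pos h]; exact htT (σ ⟨i, h⟩).2
        · simp only [hZ, dif_neg h]; exact htT hy₀
      · have hterm : ∀ i : Fin k, W i • Z i =
            if h : (i : ℕ) < t.card then w (σ ⟨i, h⟩) • (σ ⟨i, h⟩ : E) else 0 := by
          intro i
          by_cases h : (i : ℕ) < t.card
          · simp only [hW, hZ, dif_pos h]
          · simp only [hW, hZ, dif_neg h, zero_smul]
        simp only [hterm]
        rw [padded_sum_eq t hcard σ (fun y => w y • y)]
        rw [← Finset.centerMass_eq_of_sum_1 _ _ hw₁] at *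
        simpa [Finset.centerMass, id] using hwx
    · rintro x ⟨⟨w, z⟩, ⟨⟨hw₀, hw₁⟩, hz⟩, rfl⟩
      have := Finset.centerMass_mem_convexHull (Finset.univ : Finset (Fin k))
        (w := w) (fun i _ => hw₀ i) (by rw [hw₁]; norm_num) (z := z)
        (fun i _ => hz i (Set.mem_univ i))
      rwa [Finset.centerMass_eq_of_sum_1 _ _ hw₁] at this
  rw [himg]
  refine ((isCompact_stdSimplex _ _).prod (isCompact_univ_pi fun _ => hT)).image ?_
  exact continuous_finset_sum _ fun i _ =>
    ((continuous_apply i).comp continuous_fst).smul ((continuous_apply i).comp continuous_snd)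

end AuxHull

section AuxMeasure
variable {Ω : Type*} [MetricSpace Ω] [Nonempty Ω] [CompactSpace Ω]
  [TopologicalSpace.SeparableSpace Ω] [MeasurableSpace Ω] [BorelSpace Ω]

private lemma cont_integrable {F : Type*} [NormedAddCommGroup F] {h : Ω → F}
    (hc : Continuous h) (μ : Measure Ω) [IsFiniteMeasure μ] : Integrable h μ :=
  hc.integrable_of_hasCompactSupport (IsClosed.isCompact (isClosed_tsupport h))

private lemma exists_measure_of_mem_convexHull {n : ℕ} {g : Ω → EuclideanSpace ℝ (Fin n)}
    (hg : Continuous g) {x : EuclideanSpace ℝ (Fin n)}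
    (hx : x ∈ convexHull ℝ (Set.range g)) :
    ∃ P : Measure Ω, IsProbabilityMeasure P ∧ ∫ ω, g ω ∂P = x := by
  rw [convexHull_eq] at hx
  obtain ⟨ι, t, w, z, hw₀, hw₁, hz, hc⟩ := hx
  classical
  set ω : ι → Ω := fun i => if h : i ∈ t then (hz i h).choose else Classical.arbitrary Ω with hω
  have hωz : ∀ i ∈ t, g (ω i) = z i := by
    intro i hi
    simp only [hω, dif_pos hi]
    exact (hz i hi).choose_spec
  set P : Measure Ω := ∑ i ∈ t, ENNReal.ofReal (w i) • Measure.dirac (ω i) with hP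
  have hPuniv : P Set.univ = 1 := by
    rw [hP, Measure.finset_sum_apply]
    simp only [Measure.smul_apply, measure_univ, smul_eq_mul, mul_one]
    rw [← ENNReal.ofReal_sum_of_nonneg hw₀, hw₁, ENNReal.ofReal_one]
  have hprob : IsProbabilityMeasure P := ⟨hPuniv⟩
  refine ⟨P, hprob, ?_⟩
  have hInt : Integrable g P := cont_integrable hg P
  rw [hP] at hInt ⊢
  rw [integral_finset_sum_measure (integrable_finset_sum_measure.mp hInt)]
  have hterm : ∀ i ∈ t, (∫ a, g a ∂(ENNReal.ofReal (w i) • Measure.dirac (ω i)))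
      = w i • z i := by
    intro i hi
    rw [integral_smul_measure, integral_dirac, hωz i hi, ENNReal.toReal_ofReal (hw₀ i hi)]
  rw [Finset.sum_congr rfl hterm, ← Finset.centerMass_eq_of_sum_1 _ _ hw₁, hc]

private lemma exists_fullSupport_prob :
    ∃ ν : Measure Ω, IsProbabilityMeasure ν ∧ HasFullSupport ν := by
  set u : ℕ → Ω := TopologicalSpace.denseSeq Ω with hu
  set ν : Measure Ω := Measure.sum fun n : ℕ =>
    ((2 : ℝ≥0∞)⁻¹ ^ (n + 1)) • Measure.dirac (u n) with hν
  have hmass : ν Set.univ = 1 := by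
    rw [hν, Measure.sum_apply _ MeasurableSet.univ]
    simp only [Measure.smul_apply, measure_univ, smul_eq_mul, mul_one]
    have : ∀ n : ℕ, (2 : ℝ≥0∞)⁻¹ ^ (n + 1) = (2 : ℝ≥0∞)⁻¹ ^ n * 2⁻¹ := fun n => pow_succ _ _
    rw [tsum_congr this, ENNReal.tsum_mul_right, ENNReal.tsum_geometric,
      ENNReal.one_sub_inv_two, inv_inv]
    exact ENNReal.mul_inv_cancel two_ne_zero ENNReal.ofNat_ne_top
  refine ⟨ν, ⟨hmass⟩, fun U hU hUne => ?_⟩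
  obtain ⟨n, hn⟩ := (TopologicalSpace.denseRange_denseSeq Ω).exists_mem_open hU hUne
  have h1 : (((2 : ℝ≥0∞)⁻¹ ^ (n + 1)) • Measure.dirac (u n)) U ≤ ν U := by
    rw [hν, Measure.sum_apply _ hU.measurableSet]
    exact ENNReal.le_tsum n
  have h2 : (((2 : ℝ≥0∞)⁻¹ ^ (n + 1)) • Measure.dirac (u n)) U = (2 : ℝ≥0∞)⁻¹ ^ (n + 1) := by
    rw [Measure.smul_apply, Measure.dirac_apply_of_mem hn, smul_eq_mul, mul_one]
  refine lt_of_lt_of_le ?_ h1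
  rw [h2]
  exact pos_iff_ne_zero.2 (pow_ne_zero _ (ENNReal.inv_ne_zero.2 ENNReal.ofNat_ne_top))

private lemma isFiniteMeasure_ofReal_smul (c : ℝ) (μ : Measure Ω) [IsFiniteMeasure μ] :
    IsFiniteMeasure (ENNReal.ofReal c • μ) := by
  constructor
  rw [Measure.smul_apply, smul_eq_mul]
  exact ENNReal.mul_lt_top ENNReal.ofReal_lt_top (measure_lt_top μ _)

private lemma mix_prob (P Q : Measure Ω) [IsProbabilityMeasure P] [IsProbabilityMeasure Q]
    {θ : ℝ} (h0 : 0 ≤ θ) (h1 : θ ≤ 1) :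
    IsProbabilityMeasure (ENNReal.ofReal (1 - θ) • P + ENNReal.ofReal θ • Q) := by
  constructor
  rw [Measure.add_apply, Measure.smul_apply, Measure.smul_apply, measure_univ, measure_univ,
    smul_eq_mul, smul_eq_mul, mul_one, mul_one, ← ENNReal.ofReal_add (by linarith) h0]
  norm_num

private lemma mix_integral {F : Type*} [NormedAddCommGroup F] [NormedSpace ℝ F] [CompleteSpace F]
    (P Q : Measure Ω) [IsProbabilityMeasure P] [IsProbabilityMeasure Q] {θ : ℝ}
    (h0 : 0 ≤ θ) (h1 : θ ≤ 1) {h : Ω → F} (hc : Continuous h) :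
    ∫ ω, h ω ∂(ENNReal.ofReal (1 - θ) • P + ENNReal.ofReal θ • Q)
      = (1 - θ) • ∫ ω, h ω ∂P + θ • ∫ ω, h ω ∂Q := by
  haveI := isFiniteMeasure_ofReal_smul (1 - θ) P
  haveI := isFiniteMeasure_ofReal_smul θ Q
  rw [integral_add_measure (cont_integrable hc _) (cont_integrable hc _),
    integral_smul_measure, integral_smul_measure, ENNReal.toReal_ofReal h0,
    ENNReal.toReal_ofReal (by linarith)]

private lemma exists_neg_smul_mem_convexHull {n : ℕ} {Y : Ω → EuclideanSpace ℝ (Fin n)}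
    (hY : Continuous Y)
    (hNA : ∀ π : EuclideanSpace ℝ (Fin n), (∀ ω, 0 ≤ ⟪π, Y ω⟫) → ∀ ω, ⟪π, Y ω⟫ = 0)
    {b : EuclideanSpace ℝ (Fin n)} (hb : b ∈ convexHull ℝ (Set.range Y)) :
    ∃ t : ℝ, 0 < t ∧ (-t) • b ∈ convexHull ℝ (Set.range Y) := by
  set G := convexHull ℝ (Set.range Y) with hG
  have hGcc : IsCompact G := isCompact_convexHull_of_isCompact (isCompact_range hY)
  have hGconv : Convex ℝ G := convex_convexHull ℝ _
  set V : Submodule ℝ (EuclideanSpace ℝ (Fin n)) := Submodule.span ℝ (Set.range Y) with hV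
  have hGV : G ⊆ (V : Set (EuclideanSpace ℝ (Fin n))) :=
    convexHull_min Submodule.subset_span V.convex
  by_contra hcon
  push_neg at hcon
  have hsep : ∀ k : ℕ, ∃ p : EuclideanSpace ℝ (Fin n),
      ‖p‖ = 1 ∧ p ∈ V ∧ ∀ a ∈ G, ⟪p, a⟫ < (1 / (k + 1 : ℝ)) * ‖b‖ := by
    intro k
    set t : ℝ := 1 / (k + 1 : ℝ) with ht
    have htpos : 0 < t := by positivity
    have hx : (-t) • b ∉ G := hcon t htpos
    obtain ⟨φ, u, h₁, h₂⟩ := geometric_hahn_banach_closed_point hGconv hGcc.isClosed hx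
    set π : EuclideanSpace ℝ (Fin n) := (InnerProductSpace.toDual ℝ _).symm φ with hπ
    have hπa : ∀ a, ⟪π, a⟫ = φ a := fun a => InnerProductSpace.toDual_symm_apply
    set q : EuclideanSpace ℝ (Fin n) := (Submodule.orthogonalProjection V π : EuclideanSpace ℝ (Fin n))
      with hq
    have hqa : ∀ a ∈ V, ⟪q, a⟫ = ⟪π, a⟫ := by
      intro a ha
      have : ⟪π - q, a⟫ = 0 := V.starProjection_inner_eq_zero π a ha
      rw [inner_sub_left] at this
      linarith
    have hqlt : ∀ a ∈ G, ⟪q, a⟫ < (-t) * ⟪q, b⟫ := by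
      intro a ha
      have h3 : ⟪π, a⟫ < u := by rw [hπa]; exact h₁ a ha
      have h4 : u < (-t) * ⟪π, b⟫ := by
        have := h₂
        rw [← hπa, inner_smul_right] at this
        exact this
      rw [hqa a (hGV ha), hqa b (hGV hb)]
      linarith
    have hqne : q ≠ 0 := by
      intro h0
      have := hqlt b hb
      rw [h0, inner_zero_left] at this
      simp at this
    have hqnorm : 0 < ‖q‖ := norm_pos_iff.2 hqne
    refine ⟨‖q‖⁻¹ • q, ?_, Submodule.smul_mem V _ (Submodule.orthogonalProjection V π).2, ?_⟩
    · rw [norm_smul, norm_inv, norm_norm, inv_mul_cancel₀ hqnorm.ne']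
    · intro a ha
      rw [inner_smul_left, RCLike.conj_to_real]
      have h5 : ⟪q, a⟫ < (-t) * ⟪q, b⟫ := hqlt a ha
      have h6 : ‖q‖⁻¹ * ⟪q, a⟫ < ‖q‖⁻¹ * ((-t) * ⟪q, b⟫) :=
        mul_lt_mul_of_pos_left h5 (inv_pos.2 hqnorm)
      have h7 : ‖q‖⁻¹ * ((-t) * ⟪q, b⟫) = (-t) * ⟪‖q‖⁻¹ • q, b⟫ := by
        rw [inner_smul_left, RCLike.conj_to_real]; ring
      have h8 : |⟪‖q‖⁻¹ • q, b⟫| ≤ ‖b‖ := by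
        have := abs_real_inner_le_norm (‖q‖⁻¹ • q) b
        rw [norm_smul, norm_inv, norm_norm, inv_mul_cancel₀ hqnorm.ne', one_mul] at this
        exact this
      have h9 : (-t) * ⟪‖q‖⁻¹ • q, b⟫ ≤ t * ‖b‖ := by
        have hle : -⟪‖q‖⁻¹ • q, b⟫ ≤ |⟪‖q‖⁻¹ • q, b⟫| := neg_le_abs _
        nlinarith [abs_nonneg ⟪‖q‖⁻¹ • q, b⟫]
      calc ‖q‖⁻¹ * ⟪q, a⟫ < (-t) * ⟪‖q‖⁻¹ • q, b⟫ := by rw [← h7]; exact h6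
        _ ≤ t * ‖b‖ := h9
  choose p hp1 hpV hplt using hsep
  have hK : IsCompact (Metric.sphere (0 : EuclideanSpace ℝ (Fin n)) 1 ∩ (V : Set _)) :=
    (isCompact_sphere 0 1).inter_right V.closed_of_finiteDimensional
  have hpK : ∀ k, p k ∈ Metric.sphere (0 : EuclideanSpace ℝ (Fin n)) 1 ∩ (V : Set _) :=
    fun k => ⟨mem_sphere_zero_iff_norm.2 (hp1 k), hpV k⟩
  obtain ⟨plim, hpKlim, φs, hφmono, hconv⟩ := hK.tendsto_subseq hpK
  have hle0 : ∀ a ∈ G, ⟪plim, a⟫ ≤ 0 := by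
    intro a ha
    have h1 : Filter.Tendsto (fun j => ⟪p (φs j), a⟫) Filter.atTop (nhds ⟪plim, a⟫) :=
      (hconv.inner tendsto_const_nhds)
    have h3 : Filter.Tendsto (fun j => (1 / ((φs j : ℝ) + 1)) * ‖b‖) Filter.atTop (nhds 0) := by
      have ht : Filter.Tendsto (fun k : ℕ => 1 / ((k : ℝ) + 1)) Filter.atTop (nhds 0) :=
        tendsto_one_div_add_atTop_nhds_zero_nat
      have := (ht.comp hφmono.tendsto_atTop).mul_const ‖b‖
      rwa [zero_mul] at this
    refine le_of_tendsto_of_tendsto' h1 h3 fun j => ?_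
    exact (hplt (φs j) a ha).le
  have hzero : ∀ ω, ⟪plim, Y ω⟫ = 0 := by
    have := hNA (-plim) (fun ω => by
      rw [inner_neg_left]
      have := hle0 (Y ω) (subset_convexHull ℝ _ (Set.mem_range_self ω))
      linarith)
    intro ω
    have h := this ω
    rw [inner_neg_left] at h
    linarith
  have hVle : V ≤ (Submodule.span ℝ {plim})ᗮ := by
    rw [hV, Submodule.span_le]
    rintro _ ⟨ω, rfl⟩
    exact Submodule.mem_orthogonal_singleton_iff_inner_right.2 (hzero ω)
  have hplimV : plim ∈ V := hpKlim.2
  have : ⟪plim, plim⟫ = 0 := (hVle hplimV) plim (Submodule.mem_span_singleton_self plim)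
  have hp0 : plim = 0 := inner_self_eq_zero.1 this
  have : ‖plim‖ = 1 := mem_sphere_zero_iff_norm.1 hpKlim.1
  rw [hp0, norm_zero] at this
  norm_num at this

private lemma exists_fullSupport_mm {D : ℕ} (f : Fin (D + 1) → ℝ) (S : Fin (D + 1) → C(Ω, ℝ))
    (hS0 : ∀ ω, S 0 ω = 1) (hf0 : f 0 = 1) (hNA : ArbitrageFree f S) :
    ∃ P : Measure Ω, IsMartingaleMeasure f S P ∧ HasFullSupport P := by
  classical
  set Y : Ω → EuclideanSpace ℝ (Fin (D + 1)) :=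
    fun ω => (EuclideanSpace.equiv (Fin (D + 1)) ℝ).symm (fun d => S d ω - f d) with hYdef
  have hYcoord : ∀ ω d, Y ω d = S d ω - f d := fun ω d => rfl
  have hYc : Continuous Y := (EuclideanSpace.equiv (Fin (D + 1)) ℝ).symm.continuous.comp
    (continuous_pi fun d => ((S d).continuous).sub continuous_const)
  have hinner : ∀ (π : EuclideanSpace ℝ (Fin (D + 1))) ω,
      ⟪π, Y ω⟫ = ∑ d, π d * (S d ω - f d) := by
    intro π ω
    rw [PiLp.inner_apply]
    simp only [RCLike.inner_apply, conj_trivial, hYcoord]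
    exact Finset.sum_congr rfl fun _ _ => mul_comm _ _
  have hNA' : ∀ π : EuclideanSpace ℝ (Fin (D + 1)),
      (∀ ω, 0 ≤ ⟪π, Y ω⟫) → ∀ ω, ⟪π, Y ω⟫ = 0 := by
    intro π hpos
    by_contra hne
    push_neg at hne
    obtain ⟨ω₀, hω₀⟩ := hne
    have hpos0 : 0 < ⟪π, Y ω₀⟫ := lt_of_le_of_ne (hpos ω₀) (Ne.symm hω₀)
    set c : ℝ := ∑ d, π d * f d with hc
    set π' : Fin (D + 1) → ℝ := fun d => π d - (if d = 0 then c else 0) with hπ'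
    have hpay : ∀ ω, ∑ d, π' d * S d ω = ⟪π, Y ω⟫ := by
      intro ω
      rw [hinner]
      simp only [hπ', sub_mul, mul_sub, Finset.sum_sub_distrib]
      congr 1
      simp [ite_mul, Finset.sum_ite_eq', hS0 ω, hc]
    have hcost : ∑ d, π' d * f d = 0 := by
      simp only [hπ', sub_mul, Finset.sum_sub_distrib]
      rw [← hc]
      simp [ite_mul, Finset.sum_ite_eq', hf0]
    refine hNA ⟨π', le_of_eq hcost, fun ω => ?_, ⟨ω₀, ?_⟩⟩
    · rw [hpay ω]; exact hpos ω
    · rw [hpay ω₀]; exact hpos0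
  obtain ⟨ν, hνprob, hνfull⟩ := exists_fullSupport_prob (Ω := Ω)
  haveI := hνprob
  have hGcompact : IsCompact (convexHull ℝ (Set.range Y)) :=
    isCompact_convexHull_of_isCompact (isCompact_range hYc)
  have hbmem : (∫ ω, Y ω ∂ν) ∈ convexHull ℝ (Set.range Y) :=
    (convex_convexHull ℝ _).integral_mem hGcompact.isClosed
      (Filter.Eventually.of_forall fun ω => subset_convexHull ℝ _ ⟨ω, rfl⟩)
      (cont_integrable hYc ν)
  obtain ⟨t, htpos, hmem⟩ := exists_neg_smul_mem_convexHull hYc hNA' hbmem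
  obtain ⟨P', hP'prob, hP'int⟩ := exists_measure_of_mem_convexHull hYc hmem
  haveI := hP'prob
  set θ : ℝ := t / (1 + t) with hθ
  have hθpos : 0 < θ := div_pos htpos (by linarith)
  have hθ1 : θ ≤ 1 := by rw [div_le_one (by linarith)]; linarith
  set P := ENNReal.ofReal (1 - θ) • P' + ENNReal.ofReal θ • ν with hPdef
  haveI hPprob : IsProbabilityMeasure P := mix_prob P' ν hθpos.le hθ1
  have hPint : ∫ ω, Y ω ∂P = 0 := by
    rw [hPdef, mix_integral P' ν hθpos.le hθ1 hYc, hP'int]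
    rw [smul_smul, ← add_smul]
    convert zero_smul ℝ _
    rw [hθ]
    field_simp
    ring
  have hcomp : ∀ d, ∫ ω, S d ω ∂P = f d := by
    intro d
    have h1 : ∫ ω, (EuclideanSpace.proj d (𝕜 := ℝ)) (Y ω) ∂P
        = (EuclideanSpace.proj d (𝕜 := ℝ)) (∫ ω, Y ω ∂P) :=
      ContinuousLinearMap.integral_comp_comm _ (cont_integrable hYc P)
    rw [hPint, map_zero] at h1
    have h2 : ∫ ω, (EuclideanSpace.proj d (𝕜 := ℝ)) (Y ω) ∂P = ∫ ω, (S d ω - f d) ∂P :=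
      integral_congr_ae (Filter.Eventually.of_forall fun ω => by
        simp [hYcoord])
    rw [h2] at h1
    have h3 : ∫ ω, (S d ω - f d) ∂P = (∫ ω, S d ω ∂P) - f d := by
      rw [integral_sub (cont_integrable (S d).continuous P) (integrable_const _),
        integral_const, probReal_univ, one_smul]
    rw [h3] at h1
    linarith
  refine ⟨P, ⟨hPprob, fun d => ⟨cont_integrable (S d).continuous P, hcomp d⟩⟩, ?_⟩
  intro U hU hUne
  have hν := hνfull U hU hUne
  calc (0 : ℝ≥0∞) < ENNReal.ofReal θ * ν U :=
        ENNReal.mul_pos (ENNReal.ofReal_pos.2 hθpos).ne' hν.ne'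
    _ ≤ P U := by
        rw [hPdef, Measure.add_apply, Measure.smul_apply, smul_eq_mul]
        exact le_add_self

end AuxMeasure

/-- the cheapest superhedging cost equals the least upper bound of the
no-arbitrage prices (expectations under full support martingale measures). -/
theorem superhedge_eq_sup_noArbitragePrices
    [MetricSpace Ω] [Nonempty Ω] [CompactSpace Ω] [TopologicalSpace.SeparableSpace Ω]
    [CompleteSpace Ω] [MeasurableSpace Ω] [BorelSpace Ω] {D : ℕ} (f : Fin (D + 1) → ℝ) (S : Fin (D + 1) → C(Ω, ℝ))
    (hf : ∀ d, 0 ≤ f d) (hS : ∀ d ω, 0 ≤ S d ω)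
    (hS0 : ∀ ω, S 0 ω = 1) (hf0 : f 0 = 1)
    (hNA : ArbitrageFree f S) (H : C(Ω, ℝ)) (hH : ∀ ω, 0 ≤ H ω) :
    sInf {x : ℝ | ∃ π : Fin (D + 1) → ℝ, IsSuperhedge S H π ∧ x = ∑ d, π d * f d} =
    sSup {x : ℝ | ∃ P : Measure Ω, IsMartingaleMeasure f S P ∧ HasFullSupport P ∧
      x = ∫ ω, H ω ∂P} := by
  classical
  set A := {x : ℝ | ∃ π : Fin (D + 1) → ℝ, IsSuperhedge S H π ∧ x = ∑ d, π d * f d} with hA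
  set B := {x : ℝ | ∃ P : Measure Ω, IsMartingaleMeasure f S P ∧ HasFullSupport P ∧
      x = ∫ ω, H ω ∂P} with hB
  have pair : ∀ (P : Measure Ω), IsMartingaleMeasure f S P → ∀ π : Fin (D + 1) → ℝ,
      IsSuperhedge S H π → ∫ ω, H ω ∂P ≤ ∑ d, π d * f d := by
    intro P hP π hπ
    haveI := hP.1
    have h1 : ∫ ω, H ω ∂P ≤ ∫ ω, (∑ d, π d * S d ω) ∂P :=
      integral_mono (cont_integrable H.continuous P)
        (cont_integrable (continuous_finset_sum _ fun d _ =>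
          continuous_const.mul (S d).continuous) P) (fun ω => hπ ω)
    have h2 : ∫ ω, (∑ d, π d * S d ω) ∂P = ∑ d, π d * ∫ ω, S d ω ∂P := by
      rw [integral_finset_sum _ fun d _ =>
        ((cont_integrable (S d).continuous P).const_mul (π d))]
      exact Finset.sum_congr rfl fun d _ => integral_const_mul _ _
    have h3 : ∀ d, ∫ ω, S d ω ∂P = f d := fun d => (hP.2 d).2
    calc ∫ ω, H ω ∂P ≤ _ := h1
      _ = ∑ d, π d * ∫ ω, S d ω ∂P := h2
      _ = ∑ d, π d * f d := Finset.sum_congr rfl fun d _ => by rw [h3]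
  obtain ⟨ω₁, -, hω₁⟩ := isCompact_univ.exists_isMaxOn Set.univ_nonempty
    H.continuous.continuousOn
  set πA : Fin (D + 1) → ℝ := fun d => if d = 0 then H ω₁ else 0 with hπA
  have hπAsh : IsSuperhedge S H πA := by
    intro ω
    have hh : ∑ d, πA d * S d ω = H ω₁ := by
      simp [hπA, ite_mul, Finset.sum_ite_eq', hS0 ω]
    rw [hh]
    exact hω₁ (Set.mem_univ ω)
  have hπAcost : ∑ d, πA d * f d = H ω₁ := by
    simp [hπA, ite_mul, Finset.sum_ite_eq', hf0]
  have hAne : (H ω₁) ∈ A := ⟨πA, hπAsh, hπAcost.symm⟩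
  obtain ⟨P₀, hP₀mm, hP₀fs⟩ := exists_fullSupport_mm f S hS0 hf0 hNA
  haveI := hP₀mm.1
  set y₀ : ℝ := ∫ ω, H ω ∂P₀ with hy₀
  have hBne : y₀ ∈ B := ⟨P₀, hP₀mm, hP₀fs, rfl⟩
  have hBbdd : BddAbove B := by
    refine ⟨H ω₁, fun b hb => ?_⟩
    obtain ⟨P, hP, -, rfl⟩ := hb
    calc ∫ ω, H ω ∂P ≤ ∑ d, πA d * f d := pair P hP πA hπAsh
      _ = H ω₁ := hπAcost
  have hAbdd : BddBelow A := by
    refine ⟨y₀, fun a ha => ?_⟩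
    obtain ⟨π, hπ, rfl⟩ := ha
    exact pair P₀ hP₀mm π hπ
  have hge : sSup B ≤ sInf A := by
    apply le_csInf ⟨_, hAne⟩
    intro a ha
    obtain ⟨π, hπ, rfl⟩ := ha
    apply csSup_le ⟨_, hBne⟩
    intro b hb
    obtain ⟨P, hP, -, rfl⟩ := hb
    exact pair P hP π hπ
  have hle : sInf A ≤ sSup B := by
    apply le_of_forall_pos_le_add
    intro ε hε
    set g : Ω → EuclideanSpace ℝ (Fin (D + 2)) :=
      fun ω => (EuclideanSpace.equiv (Fin (D + 2)) ℝ).symm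
        (fun i => Fin.lastCases (H ω) (fun d => S d ω) i) with hgdef
    have hgcoord : ∀ ω i, g ω i = Fin.lastCases (H ω) (fun d => S d ω) i := fun ω i => rfl
    have hgc : Continuous g := (EuclideanSpace.equiv (Fin (D + 2)) ℝ).symm.continuous.comp
      (continuous_pi fun i => by
        induction i using Fin.lastCases with
        | last => simpa using H.continuous
        | cast d => simpa using (S d).continuous)
    set p : ℝ → EuclideanSpace ℝ (Fin (D + 2)) := fun y =>
      (EuclideanSpace.equiv (Fin (D + 2)) ℝ).symm (fun i => Fin.lastCases y f i) with hpdef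
    have hpcoord : ∀ (y : ℝ) i, p y i = Fin.lastCases y f i := fun y i => rfl
    set K := convexHull ℝ (Set.range g) with hKdef
    have hKcpt : IsCompact K := isCompact_convexHull_of_isCompact (isCompact_range hgc)
    have hproj : ∀ (P : Measure Ω), IsProbabilityMeasure P → ∀ i : Fin (D + 2),
        (∫ ω, g ω ∂P) i = ∫ ω, g ω i ∂P := by
      intro P hP i
      haveI := hP
      have h1 : ∫ ω, (EuclideanSpace.proj i (𝕜 := ℝ)) (g ω) ∂P
          = (EuclideanSpace.proj i (𝕜 := ℝ)) (∫ ω, g ω ∂P) :=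
        ContinuousLinearMap.integral_comp_comm _ (cont_integrable hgc P)
      exact h1.symm
    have hrep : ∀ y : ℝ, p y ∈ K →
        ∃ P : Measure Ω, IsMartingaleMeasure f S P ∧ ∫ ω, H ω ∂P = y := by
      intro y hy
      obtain ⟨P, hPprob, hPint⟩ := exists_measure_of_mem_convexHull hgc hy
      haveI := hPprob
      have hSd : ∀ d, ∫ ω, S d ω ∂P = f d := by
        intro d
        have h1 := hproj P hPprob (Fin.castSucc d)
        rw [hPint] at h1
        have h2 : ∫ ω, g ω (Fin.castSucc d) ∂P = ∫ ω, S d ω ∂P :=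
          integral_congr_ae (Filter.Eventually.of_forall fun ω => by
            simp [hgcoord, Fin.lastCases_castSucc])
        have h3 : p y (Fin.castSucc d) = f d := by
          simp [hpcoord, Fin.lastCases_castSucc]
        rw [h2, h3] at h1
        exact h1.symm
      have hHy : ∫ ω, H ω ∂P = y := by
        have h1 := hproj P hPprob (Fin.last (D + 1))
        rw [hPint] at h1
        have h2 : ∫ ω, g ω (Fin.last (D + 1)) ∂P = ∫ ω, H ω ∂P :=
          integral_congr_ae (Filter.Eventually.of_forall fun ω => by
            simp [hgcoord, Fin.lastCases_last])
        have h3 : p y (Fin.last (D + 1)) = y := by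
          simp [hpcoord, Fin.lastCases_last]
        rw [h2, h3] at h1
        exact h1.symm
      exact ⟨P, ⟨hPprob, fun d => ⟨cont_integrable (S d).continuous P, hSd d⟩⟩, hHy⟩
    have hKy : ∀ y : ℝ, p y ∈ K → y ≤ sSup B := by
      intro y hy
      obtain ⟨P, hPmm, hPH⟩ := hrep y hy
      haveI := hPmm.1
      have hmixmem : ∀ k : ℕ,
          (1 - 1 / ((k : ℝ) + 1)) * y + (1 / ((k : ℝ) + 1)) * y₀ ≤ sSup B := by
        intro k
        set θ : ℝ := 1 / ((k : ℝ) + 1) with hθdef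
        have hθpos : 0 < θ := by positivity
        have hθ1 : θ ≤ 1 := by
          rw [hθdef, div_le_one (by positivity)]
          linarith [Nat.cast_nonneg (α := ℝ) k]
        set R := ENNReal.ofReal (1 - θ) • P + ENNReal.ofReal θ • P₀ with hRdef
        haveI hRprob : IsProbabilityMeasure R := mix_prob P P₀ hθpos.le hθ1
        have hRmm : IsMartingaleMeasure f S R := by
          refine ⟨hRprob, fun d => ⟨cont_integrable (S d).continuous R, ?_⟩⟩
          rw [hRdef, mix_integral P P₀ hθpos.le hθ1 (S d).continuous,
            (hPmm.2 d).2, (hP₀mm.2 d).2, smul_eq_mul, smul_eq_mul]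
          ring
        have hRfs : HasFullSupport R := by
          intro U hU hUne
          have h := hP₀fs U hU hUne
          calc (0 : ℝ≥0∞) < ENNReal.ofReal θ * P₀ U :=
              ENNReal.mul_pos (ENNReal.ofReal_pos.2 hθpos).ne' h.ne'
            _ ≤ R U := by
                rw [hRdef, Measure.add_apply, Measure.smul_apply, smul_eq_mul]
                exact le_add_self
        have hRH : ∫ ω, H ω ∂ R = (1 - θ) * y + θ * y₀ := by
          rw [hRdef, mix_integral P P₀ hθpos.le hθ1 H.continuous, hPH, smul_eq_mul,
            smul_eq_mul]
        exact le_csSup hBbdd ⟨R, hRmm, hRfs, hRH.symm⟩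
      have hlim : Filter.Tendsto
          (fun k : ℕ => (1 - 1 / ((k : ℝ) + 1)) * y + (1 / ((k : ℝ) + 1)) * y₀)
          Filter.atTop (nhds y) := by
        have ht : Filter.Tendsto (fun k : ℕ => 1 / ((k : ℝ) + 1)) Filter.atTop (nhds 0) :=
          tendsto_one_div_add_atTop_nhds_zero_nat
        have h := (((tendsto_const_nhds :
            Filter.Tendsto (fun _ : ℕ => (1 : ℝ)) Filter.atTop (nhds 1)).sub ht).mul_const
            y).add (ht.mul_const y₀)
        simpa using h
      exact le_of_tendsto hlim (Filter.Eventually.of_forall hmixmem)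
    have hnot : p (sSup B + ε) ∉ K := by
      intro h
      have := hKy _ h
      linarith
    obtain ⟨φ, u, h₁, h₂⟩ := geometric_hahn_banach_closed_point (convex_convexHull ℝ _)
      hKcpt.isClosed hnot
    set π : EuclideanSpace ℝ (Fin (D + 2)) := (InnerProductSpace.toDual ℝ _).symm φ with hπ
    have hπa : ∀ a, ⟪π, a⟫ = φ a := fun a => InnerProductSpace.toDual_symm_apply
    set lam : ℝ := π (Fin.last (D + 1)) with hlam
    set C : ℝ := ∑ d, π (Fin.castSucc d) * f d with hC
    have hpin : ∀ y : ℝ, ⟪π, p y⟫ = C + lam * y := by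
      intro y
      rw [PiLp.inner_apply, Fin.sum_univ_castSucc]
      simp only [RCLike.inner_apply, conj_trivial, hpcoord, Fin.lastCases_castSucc,
        Fin.lastCases_last]
      rw [hC, hlam, mul_comm y]
      congr 1
      exact Finset.sum_congr rfl fun _ _ => mul_comm _ _
    have hgin : ∀ ω, ⟪π, g ω⟫ = (∑ d, π (Fin.castSucc d) * S d ω) + lam * H ω := by
      intro ω
      rw [PiLp.inner_apply, Fin.sum_univ_castSucc]
      simp only [RCLike.inner_apply, conj_trivial, hgcoord, Fin.lastCases_castSucc,
        Fin.lastCases_last]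
      rw [hlam, mul_comm (H ω)]
      congr 1
      exact Finset.sum_congr rfl fun _ _ => mul_comm _ _
    have hqmem : (∫ ω, g ω ∂P₀) ∈ K :=
      (convex_convexHull ℝ _).integral_mem hKcpt.isClosed
        (Filter.Eventually.of_forall fun ω => subset_convexHull ℝ _ ⟨ω, rfl⟩)
        (cont_integrable hgc P₀)
    have hqp : (∫ ω, g ω ∂P₀) = p y₀ := by
      ext i
      rw [hproj P₀ hP₀mm.1 i]
      induction i using Fin.lastCases with
      | last =>
        have h2 : ∫ ω, g ω (Fin.last (D + 1)) ∂P₀ = ∫ ω, H ω ∂P₀ :=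
          integral_congr_ae (Filter.Eventually.of_forall fun ω => by
            simp [hgcoord, Fin.lastCases_last])
        rw [h2]
        simp [hpcoord, Fin.lastCases_last, hy₀]
      | cast d =>
        have h2 : ∫ ω, g ω (Fin.castSucc d) ∂P₀ = ∫ ω, S d ω ∂P₀ :=
          integral_congr_ae (Filter.Eventually.of_forall fun ω => by
            simp [hgcoord, Fin.lastCases_castSucc])
        rw [h2, (hP₀mm.2 d).2]
        simp [hpcoord, Fin.lastCases_castSucc]
    have hy₀B : y₀ ≤ sSup B := le_csSup hBbdd hBne
    have hq : C + lam * y₀ < u := by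
      have h := h₁ _ hqmem
      rw [hqp, ← hπa, hpin] at h
      exact h
    have hup : u < C + lam * (sSup B + ε) := by
      have h := h₂
      rw [← hπa, hpin] at h
      exact h
    have hlampos : 0 < lam := by nlinarith [hq, hup, hy₀B, hε]
    set πH : Fin (D + 1) → ℝ :=
      fun d => (if d = 0 then u / lam else 0) - π (Fin.castSucc d) / lam with hπH
    have hpayH : ∀ ω, ∑ d, πH d * S d ω
        = u / lam - (∑ d, π (Fin.castSucc d) * S d ω) / lam := by
      intro ω
      simp only [hπH, sub_mul, Finset.sum_sub_distrib]
      congr 1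
      · simp [ite_mul, Finset.sum_ite_eq', hS0 ω]
      · rw [Finset.sum_div]
        exact Finset.sum_congr rfl fun d _ => by rw [div_mul_eq_mul_div]
    have hcostH : ∑ d, πH d * f d = u / lam - C / lam := by
      simp only [hπH, sub_mul, Finset.sum_sub_distrib]
      congr 1
      · simp [ite_mul, Finset.sum_ite_eq', hf0]
      · rw [hC, Finset.sum_div]
        exact Finset.sum_congr rfl fun d _ => by rw [div_mul_eq_mul_div]
    have hshH : IsSuperhedge S H πH := by
      intro ω
      have h := h₁ _ (subset_convexHull ℝ _ ⟨ω, rfl⟩ : g ω ∈ K)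
      rw [← hπa, hgin] at h
      rw [hpayH ω]
      have h5 : H ω ≤ (u - ∑ d, π (Fin.castSucc d) * S d ω) / lam := by
        rw [le_div_iff₀ hlampos]
        nlinarith [h]
      calc H ω ≤ _ := h5
        _ = u / lam - (∑ d, π (Fin.castSucc d) * S d ω) / lam := by rw [sub_div]
    have hAmem : (∑ d, πH d * f d) ∈ A := ⟨πH, hshH, rfl⟩
    have hfin : (∑ d, πH d * f d) ≤ sSup B + ε := by
      rw [hcostH, ← sub_div, div_le_iff₀ hlampos]
      nlinarith [hup]
    exact le_trans (csInf_le hAbdd hAmem) hfin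
  exact le_antisymm hle hge
end

section
/- Let Ω be a nonempty compact Polish space, let S_0, ..., S_D : Ω → ℝ be continuous functions with S_0 ≡ 1, and let H : Ω → ℝ be continuous. Then the cone C := { ( (∫ S_0 dμ, ..., ∫ S_D dμ), ∫ H dμ ) : μ a finite nonnegative Borel measure on Ω } is a closed subset of ℝ^{D+1} × ℝ ≅ ℝ^{D+2}. -/
open MeasureTheory

section aux
open Set Finset

theorem aux_sum_dite {F : Type*} [AddCommMonoid F] {m n : ℕ} (hcard : m ≤ n) (f : Fin m → F) :
    (∑ i : Fin n, if h : (i : ℕ) < m then f ⟨i, h⟩ else 0) = ∑ j : Fin m, f j := by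
  calc (∑ i : Fin n, if h : (i : ℕ) < m then f ⟨i, h⟩ else 0)
      = ∑ i ∈ Finset.univ.map (Fin.castLEEmb hcard),
          (if h : (i : ℕ) < m then f ⟨i, h⟩ else 0) := by
        refine (Finset.sum_subset (Finset.subset_univ _) ?_).symm
        intro i _ hi
        rw [dif_neg]
        intro h
        exact hi (Finset.mem_map.2 ⟨⟨i, h⟩, Finset.mem_univ _, rfl⟩)
    _ = ∑ j : Fin m, (if h : ((Fin.castLEEmb hcard j : Fin n) : ℕ) < m then f ⟨_, h⟩ else 0) :=
        Finset.sum_map _ _ _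
    _ = ∑ j : Fin m, f j := by
        apply Finset.sum_congr rfl
        intro j _
        rw [dif_pos (by simp)]
        exact congrArg f (Fin.ext (by simp))

/-- Convex hull of a compact set in a finite-dimensional normed space is compact. -/
theorem aux_isCompact_convexHull {E : Type*} [NormedAddCommGroup E] [NormedSpace ℝ E]
    [FiniteDimensional ℝ E] {s : Set E} (hs : IsCompact s) :
    IsCompact (convexHull ℝ s) := by
  rcases s.eq_empty_or_nonempty with rfl | ⟨s₀, hs₀⟩
  · simp [convexHull_empty]
  set n : ℕ := Module.finrank ℝ E + 1 with hn
  set g : (Fin n → ℝ) × (Fin n → E) → E := fun p => ∑ i, p.1 i • p.2 i with hg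
  have hgc : Continuous g := by
    apply continuous_finset_sum
    intro i _
    exact ((continuous_apply i).comp continuous_fst).smul
      ((continuous_apply i).comp continuous_snd)
  have hA : IsCompact ((stdSimplex ℝ (Fin n)) ×ˢ (Set.univ.pi fun _ : Fin n => s)) :=
    (isCompact_stdSimplex ℝ _).prod (isCompact_univ_pi fun _ => hs)
  have key : convexHull ℝ s =
      g '' ((stdSimplex ℝ (Fin n)) ×ˢ (Set.univ.pi fun _ : Fin n => s)) := by
    apply Set.Subset.antisymm
    · intro x hx
      obtain ⟨ι, hι, z, w, hzs, hai, hw0, hw1, hwz⟩ :=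
        eq_pos_convex_span_of_mem_convexHull hx
      have hcard : Fintype.card ι ≤ n :=
        hai.card_le_finrank_succ.trans (add_le_add_left (Submodule.finrank_le _) 1)
      set m := Fintype.card ι with hm
      set e : Fin m ≃ ι := (Fintype.equivFin ι).symm with he
      set W : Fin n → ℝ := fun i => if h : (i : ℕ) < m then w (e ⟨i, h⟩) else 0 with hW
      set Z : Fin n → E := fun i => if h : (i : ℕ) < m then z (e ⟨i, h⟩) else s₀ with hZ
      refine ⟨(W, Z), ⟨⟨fun i => ?_, ?_⟩, fun i _ => ?_⟩, ?_⟩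
      · by_cases h : (i : ℕ) < m
        · simp only [hW, dif_pos h]; exact (hw0 _).le
        · simp only [hW, dif_neg h]; exact le_refl 0
      · show ∑ i, W i = 1
        rw [show (fun i => W i) = W from rfl]
        calc ∑ i, W i = ∑ j : Fin m, w (e j) := aux_sum_dite hcard (fun j => w (e j))
          _ = ∑ j : ι, w j := Equiv.sum_comp e w
          _ = 1 := hw1
      · by_cases h : (i : ℕ) < m
        · simp only [hZ, dif_pos h]; exact hzs ⟨_, rfl⟩
        · simp only [hZ, dif_neg h]; exact hs₀
      · show ∑ i, W i • Z i = x
        have : ∀ i : Fin n, W i • Z i =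
            if h : (i : ℕ) < m then (fun j : Fin m => w (e j) • z (e j)) ⟨i, h⟩ else 0 := by
          intro i
          by_cases h : (i : ℕ) < m <;> simp [hW, hZ, h]
        rw [Finset.sum_congr rfl fun i _ => this i]
        exact ((aux_sum_dite hcard (fun j => w (e j) • z (e j))).trans
          (Equiv.sum_comp e (fun j => w j • z j))).trans hwz
    · rintro x ⟨⟨w, z⟩, ⟨hw, hz⟩, rfl⟩
      have h1 : ∑ i, w i = 1 := hw.2
      show (∑ i, w i • z i) ∈ convexHull ℝ s
      rw [← Finset.univ.centerMass_eq_of_sum_1 z h1]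
      exact Finset.univ.centerMass_mem_convexHull (fun i _ => hw.1 i) (by rw [h1]; norm_num)
        (fun i _ => hz i (Set.mem_univ i))
  rw [key]
  exact hA.image hgc

open MeasureTheory

theorem aux_isFiniteMeasure_sum_dirac {Ω : Type*} [MeasurableSpace Ω]
    {ι : Type*} [Fintype ι] (ω : ι → Ω) (r : ι → ℝ) :
    IsFiniteMeasure (∑ i : ι, ENNReal.ofReal (r i) • Measure.dirac (ω i)) := by
  constructor
  simp only [Measure.finset_sum_apply, Measure.smul_apply, smul_eq_mul, measure_univ, mul_one]
  exact ENNReal.sum_lt_top.2 fun i _ => ENNReal.ofReal_lt_top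

theorem aux_integral_sum_dirac {Ω : Type*} [MetricSpace Ω] [CompactSpace Ω]
    [MeasurableSpace Ω] [BorelSpace Ω] {ι : Type*} [Fintype ι] (ω : ι → Ω) (r : ι → ℝ)
    (hr : ∀ i, 0 ≤ r i) (g : Ω → ℝ) (hg : Continuous g) :
    ∫ a, g a ∂(∑ i : ι, ENNReal.ofReal (r i) • Measure.dirac (ω i))
      = ∑ i : ι, r i * g (ω i) := by
  have hgi : ∀ i : ι, Integrable g ((ENNReal.ofReal (r i)) • Measure.dirac (ω i)) := by
    intro i
    have : Integrable g (Measure.dirac (ω i)) :=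
      hg.integrable_of_hasCompactSupport (HasCompactSupport.of_compactSpace g)
    exact this.smul_measure ENNReal.ofReal_ne_top
  rw [integral_finset_sum_measure fun i _ => hgi i]
  refine Finset.sum_congr rfl fun i _ => ?_
  rw [integral_smul_measure, integral_dirac, ENNReal.toReal_ofReal (hr i), smul_eq_mul]

open MeasureTheory

section cone
variable {E : Type*} [NormedAddCommGroup E] [NormedSpace ℝ E]

/-- The cone over a compact set contained in an affine hyperplane `ℓ = 1` is closed. -/
theorem aux_cone_isClosed {K : Set E} (hK : IsCompact K) (ℓ : E →L[ℝ] ℝ)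
    (hK1 : ∀ k ∈ K, ℓ k = 1) :
    IsClosed {x : E | ∃ c : ℝ, 0 ≤ c ∧ ∃ k ∈ K, x = c • k} := by
  apply IsSeqClosed.isClosed
  intro u x hu hux
  choose c hc k hk hu_eq using hu
  have hcℓ : ∀ n, c n = ℓ (u n) := by
    intro n
    rw [hu_eq n, _root_.map_smul, hK1 _ (hk n), smul_eq_mul, mul_one]
  have hctend : Filter.Tendsto c Filter.atTop (nhds (ℓ x)) := by
    have := (ℓ.continuous.tendsto x).comp hux
    simpa only [Function.comp_def, ← hcℓ] using this
  have hc0 : 0 ≤ ℓ x := le_of_tendsto_of_tendsto' tendsto_const_nhds hctend fun n => hc n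
  obtain ⟨k₀, hk₀K, φ, hφ, hkφ⟩ := hK.tendsto_subseq hk
  have h1 : Filter.Tendsto (fun n => c (φ n) • k (φ n)) Filter.atTop (nhds (ℓ x • k₀)) :=
    (hctend.comp hφ.tendsto_atTop).smul hkφ
  have h2 : Filter.Tendsto (fun n => c (φ n) • k (φ n)) Filter.atTop (nhds x) := by
    have := hux.comp hφ.tendsto_atTop
    simpa only [Function.comp_def, hu_eq] using this
  exact ⟨ℓ x, hc0, k₀, hk₀K, tendsto_nhds_unique h2 h1⟩
end cone

end aux

variable {Ω : Type*}

/-- the cone of vectors of integrals of `(S_0, …, S_D, H)` over finite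
nonnegative Borel measures on a compact Polish space is closed in `ℝ^{D+1} × ℝ`. -/
theorem integral_cone_isClosed
    [MetricSpace Ω] [Nonempty Ω] [CompactSpace Ω] [TopologicalSpace.SeparableSpace Ω]
    [CompleteSpace Ω] [MeasurableSpace Ω] [BorelSpace Ω]
    {D : ℕ} (S : Fin (D + 1) → C(Ω, ℝ)) (hS0 : ∀ ω, S 0 ω = 1) (H : C(Ω, ℝ)) :
    IsClosed {p : (Fin (D + 1) → ℝ) × ℝ |
      ∃ μ : Measure Ω, IsFiniteMeasure μ ∧
        (∀ d, p.1 d = ∫ ω, S d ω ∂μ) ∧ p.2 = ∫ ω, H ω ∂μ} := by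
  set f : Ω → (Fin (D + 1) → ℝ) × ℝ := fun ω => (fun d => S d ω, H ω) with hf
  have hfc : Continuous f := by
    refine Continuous.prodMk (continuous_pi fun d => (S d).continuous) H.continuous
  set K : Set ((Fin (D + 1) → ℝ) × ℝ) := convexHull ℝ (Set.range f) with hKdef
  have hKcomp : IsCompact K := aux_isCompact_convexHull (isCompact_range hfc)
  -- the evaluation functional
  set ℓ : ((Fin (D + 1) → ℝ) × ℝ) →L[ℝ] ℝ :=
    (ContinuousLinearMap.proj 0).comp (ContinuousLinearMap.fst ℝ _ _) with hℓ
  have hℓ_apply : ∀ x : (Fin (D + 1) → ℝ) × ℝ, ℓ x = x.1 0 := fun x => rfl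
  have hK1 : ∀ k ∈ K, ℓ k = 1 := by
    intro k hkK
    have : K ⊆ {x | ℓ x = 1} := by
      apply convexHull_min
      · rintro _ ⟨ω, rfl⟩
        simp [hℓ_apply, hf, hS0 ω]
      · intro x hx y hy a b ha hb hab
        simp only [Set.mem_setOf_eq, map_add, _root_.map_smul, smul_eq_mul] at *
        rw [hx, hy, mul_one, mul_one, hab]
    exact this hkK
  have key : {p : (Fin (D + 1) → ℝ) × ℝ |
      ∃ μ : Measure Ω, IsFiniteMeasure μ ∧
        (∀ d, p.1 d = ∫ ω, S d ω ∂μ) ∧ p.2 = ∫ ω, H ω ∂μ}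
      = {x | ∃ c : ℝ, 0 ≤ c ∧ ∃ k ∈ K, x = c • k} := by
    apply Set.Subset.antisymm
    · rintro p ⟨μ, hμfin, hp1, hp2⟩
      by_cases hμ0 : μ = 0
      · subst hμ0
        obtain ⟨ω₀⟩ := (inferInstance : Nonempty Ω)
        refine ⟨0, le_refl 0, f ω₀, subset_convexHull ℝ _ ⟨ω₀, rfl⟩, ?_⟩
        ext1
        · funext d; simpa using hp1 d
        · simpa using hp2
      · haveI : NeZero μ := ⟨hμ0⟩
        set P : Measure Ω := (μ Set.univ)⁻¹ • μ with hP
        haveI : IsProbabilityMeasure P := inferInstance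
        set c : ℝ := (μ Set.univ).toReal with hc
        have hc0 : 0 ≤ c := ENNReal.toReal_nonneg
        have hfint : Integrable f P :=
          hfc.integrable_of_hasCompactSupport (HasCompactSupport.of_compactSpace f)
        have hkK : (∫ ω, f ω ∂P) ∈ K :=
          (convex_convexHull ℝ _).integral_mem hKcomp.isClosed
            (Filter.Eventually.of_forall fun ω => subset_convexHull ℝ _ ⟨ω, rfl⟩) hfint
        refine ⟨c, hc0, ∫ ω, f ω ∂P, hkK, ?_⟩
        have hμtop : μ Set.univ ≠ ⊤ := measure_ne_top μ _
        have hcμ : ∀ (g : Ω → ℝ), ∫ ω, g ω ∂μ = c * ∫ ω, g ω ∂P := by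
          intro g
          rw [hP, integral_smul_measure, ENNReal.toReal_inv, smul_eq_mul, ← mul_assoc,
            mul_inv_cancel₀, one_mul]
          exact ENNReal.toReal_ne_zero.2 ⟨(Measure.measure_univ_ne_zero).2 hμ0, hμtop⟩
        have hcomp1 : ∀ d, (∫ ω, f ω ∂P).1 d = ∫ ω, S d ω ∂P := fun d =>
          (((ContinuousLinearMap.proj d).comp
            (ContinuousLinearMap.fst ℝ (Fin (D+1) → ℝ) ℝ)).integral_comp_comm hfint).symm
        have hcomp2 : (∫ ω, f ω ∂P).2 = ∫ ω, H ω ∂P :=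
          ((ContinuousLinearMap.snd ℝ (Fin (D+1) → ℝ) ℝ).integral_comp_comm hfint).symm
        have h1 : p.1 = (c • ∫ ω, f ω ∂P).1 := by
          funext d
          rw [hp1 d, hcμ (fun ω => S d ω)]
          simp only [Prod.smul_fst, Pi.smul_apply, smul_eq_mul]
          rw [hcomp1 d]
        have h2 : p.2 = (c • ∫ ω, f ω ∂P).2 := by
          rw [hp2, hcμ (fun ω => H ω)]
          simp only [Prod.smul_snd, smul_eq_mul]
          rw [hcomp2]
        exact Prod.ext h1 h2
    · rintro x ⟨c, hc0, k, hkK, rfl⟩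
      obtain ⟨ι, hι, z, w, hzs, hai, hw0, hw1, hwz⟩ :=
        eq_pos_convex_span_of_mem_convexHull hkK
      letI := hι
      have hzf : ∀ i, ∃ a, f a = z i := fun i => hzs ⟨i, rfl⟩
      choose ω hω using hzf
      set μ : Measure Ω := ∑ i : ι, (ENNReal.ofReal (c * w i)) • Measure.dirac (ω i) with hμ
      haveI : IsFiniteMeasure μ := aux_isFiniteMeasure_sum_dirac ω (fun i => c * w i)
      have hint : ∀ g : Ω → ℝ, Continuous g →
          ∫ a, g a ∂μ = ∑ i : ι, (c * w i) * g (ω i) := fun g hg =>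
        aux_integral_sum_dirac ω (fun i => c * w i) (fun i => mul_nonneg hc0 (hw0 i).le) g hg
      refine ⟨μ, inferInstance, ?_, ?_⟩
      · intro d
        rw [hint (fun a => S d a) (S d).continuous]
        have : (c • k).1 d = c * k.1 d := rfl
        rw [this, ← hwz, Prod.fst_sum, Finset.sum_apply, Finset.mul_sum]
        refine Finset.sum_congr rfl fun i _ => ?_
        have hz1 : (z i).1 d = S d (ω i) := by rw [← hω i]
        simp only [Prod.smul_fst, Pi.smul_apply, smul_eq_mul, hz1]
        ring
      · rw [hint (fun a => H a) H.continuous]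
        have : (c • k).2 = c * k.2 := rfl
        rw [this, ← hwz, Prod.snd_sum, Finset.mul_sum]
        refine Finset.sum_congr rfl fun i _ => ?_
        have hz2 : (z i).2 = H (ω i) := by rw [← hω i]
        simp only [Prod.smul_snd, smul_eq_mul, hz2]
        ring
  rw [key]
  exact aux_cone_isClosed hKcomp ℓ hK1
end

section
/- Suppose Ω is compact, and let H : Ω → ℝ be a continuous nonnegative claim. If π is a superhedge for H and P is a full support martingale measure for (f, S) with π·f = ∫ H dP, then π replicates H: π·S(ω) = H(ω) for all ω ∈ Ω. Consequently, if H is not replicable by any portfolio, the superhedging value is not attained by any full support martingale measure. -/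
open MeasureTheory Filter Topology

variable {Ω : Type*}

section MyAux

variable {Ω : Type*} [MetricSpace Ω] [CompactSpace Ω] [MeasurableSpace Ω] [BorelSpace Ω]

set_option linter.unusedSectionVars false

lemma aux_integrable (P : Measure Ω) [IsFiniteMeasure P] (g : C(Ω, ℝ)) :
    Integrable (fun ω => g ω) P :=
  g.continuous.integrable_of_hasCompactSupport (IsClosed.isCompact (isClosed_tsupport _))

lemma aux_zero (P : Measure Ω) [IsProbabilityMeasure P] (hfs : HasFullSupport P)
    (g : C(Ω, ℝ)) (hg : ∀ ω, 0 ≤ g ω) (hint : (∫ ω, g ω ∂P) = 0) : ∀ ω, g ω = 0 := by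
  by_contra hc
  push_neg at hc
  obtain ⟨ω0, hω0⟩ := hc
  have hopen : IsOpen (Function.support fun ω => g ω) := by
    have : (Function.support fun ω => g ω) = (fun ω => g ω) ⁻¹' ({0}ᶜ) := by
      ext x; simp [Function.mem_support]
    rw [this]
    exact isOpen_compl_singleton.preimage g.continuous
  have hpos : 0 < ∫ ω, g ω ∂P := by
    rw [integral_pos_iff_support_of_nonneg (fun ω => hg ω) (aux_integrable P g)]
    exact hfs _ hopen ⟨ω0, hω0⟩
  linarith

lemma aux_payoff_cont {D : ℕ} (S : Fin (D + 1) → C(Ω, ℝ)) (π : Fin (D + 1) → ℝ) :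
    Continuous fun ω => ∑ d, π d * S d ω :=
  continuous_finset_sum _ fun d _ => (continuous_const.mul (S d).continuous)

lemma aux_payoff_integrable {D : ℕ} (S : Fin (D + 1) → C(Ω, ℝ)) (P : Measure Ω)
    [IsFiniteMeasure P] (π : Fin (D + 1) → ℝ) :
    Integrable (fun ω => ∑ d, π d * S d ω) P :=
  integrable_finset_sum _ fun d _ => ((aux_integrable P (S d)).const_mul _)

lemma aux_integral_sum {D : ℕ} (S : Fin (D + 1) → C(Ω, ℝ)) (P : Measure Ω)
    [IsFiniteMeasure P] (π : Fin (D + 1) → ℝ) :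
    (∫ ω, ∑ d, π d * S d ω ∂P) = ∑ d, π d * ∫ ω, S d ω ∂P := by
  rw [integral_finset_sum _ fun d _ => ((aux_integrable P (S d)).const_mul _)]
  exact Finset.sum_congr rfl fun d _ => integral_const_mul _ _

/-- cost = expected payoff under a martingale measure -/
lemma aux_cost_eq {D : ℕ} (f : Fin (D + 1) → ℝ) (S : Fin (D + 1) → C(Ω, ℝ)) (P : Measure Ω)
    (hmm : IsMartingaleMeasure f S P) (π : Fin (D + 1) → ℝ) :
    (∑ d, π d * f d) = ∫ ω, ∑ d, π d * S d ω ∂P := by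
  haveI := hmm.1
  rw [aux_integral_sum]
  exact Finset.sum_congr rfl fun d _ => by rw [(hmm.2 d).2]

/-- Part 1 as a lemma -/
lemma aux_part1 {D : ℕ} (f : Fin (D + 1) → ℝ) (S : Fin (D + 1) → C(Ω, ℝ))
    (H : C(Ω, ℝ)) (π : Fin (D + 1) → ℝ) (P : Measure Ω)
    (hsup : IsSuperhedge S H π) (hmm : IsMartingaleMeasure f S P) (hfs : HasFullSupport P)
    (heq : (∑ d, π d * f d) = (∫ ω, H ω ∂P)) :
    ∀ ω, (∑ d, π d * S d ω) = H ω := by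
  haveI := hmm.1
  set g : C(Ω, ℝ) := ⟨fun ω => (∑ d, π d * S d ω) - H ω,
    (aux_payoff_cont S π).sub H.continuous⟩ with hg
  have hgz : ∀ ω, g ω = 0 := by
    apply aux_zero P hfs g (fun ω => by simpa [g] using sub_nonneg.2 (hsup ω))
    have : (∫ ω, g ω ∂P)
        = (∫ ω, ∑ d, π d * S d ω ∂P) - ∫ ω, H ω ∂P := by
      simp only [g, ContinuousMap.coe_mk]
      exact integral_sub (aux_payoff_integrable S P π) (aux_integrable P H)
    rw [this, ← aux_cost_eq f S P hmm π, heq, sub_self]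
  intro ω
  have := hgz ω
  simp only [g, ContinuousMap.coe_mk] at this
  linarith

lemma aux_part2 [Nonempty Ω] {D : ℕ} (f : Fin (D + 1) → ℝ) (S : Fin (D + 1) → C(Ω, ℝ))
    (H : C(Ω, ℝ)) (hH : ∀ ω, 0 ≤ H ω) (hS0 : ∀ ω, S 0 ω = 1) (hf0 : f 0 = 1)
    (hnr : ¬ ∃ π : Fin (D + 1) → ℝ, ∀ ω, (∑ d, π d * S d ω) = H ω) :
    ¬ ∃ P : Measure Ω, IsMartingaleMeasure f S P ∧ HasFullSupport P ∧
        (∫ ω, H ω ∂P) =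
          sInf {x : ℝ | ∃ π : Fin (D + 1) → ℝ, IsSuperhedge S H π ∧ x = ∑ d, π d * f d} := by
  rintro ⟨P, hmm, hfs, heq⟩
  haveI := hmm.1
  set s := {x : ℝ | ∃ π : Fin (D + 1) → ℝ, IsSuperhedge S H π ∧ x = ∑ d, π d * f d} with hs
  set c := ∫ ω, H ω ∂P with hc
  -- s is nonempty
  obtain ⟨ω0, -, hω0⟩ := isCompact_univ.exists_isMaxOn Set.univ_nonempty H.continuous.continuousOn
  have hsne : s.Nonempty := by
    refine ⟨H ω0, fun d => if d = 0 then H ω0 else 0, fun ω => ?_, ?_⟩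
    · rw [Finset.sum_eq_single 0 (fun d _ hd => by simp [hd]) (by simp)]
      simpa [hS0 ω] using hω0 (Set.mem_univ ω)
    · rw [Finset.sum_eq_single 0 (fun d _ hd => by simp [hd]) (by simp)]
      simp [hf0]
  -- every element of s is ≥ c
  have hlb : ∀ x ∈ s, c ≤ x := by
    rintro x ⟨π, hπ, rfl⟩
    rw [aux_cost_eq f S P hmm π]
    exact integral_mono (aux_integrable P H) (aux_payoff_integrable S P π) hπ
  -- minimizing sequence
  have hseq : ∀ n : ℕ, ∃ π : Fin (D + 1) → ℝ,
      IsSuperhedge S H π ∧ (∑ d, π d * f d) < c + 1 / (n + 1) := by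
    intro n
    have hlt : sInf s < c + 1 / (n + 1) := by
      rw [← heq]
      have : (0:ℝ) < 1 / (n + 1) := by positivity
      linarith
    obtain ⟨x, hx, hxlt⟩ := exists_lt_of_csInf_lt hsne hlt
    obtain ⟨π, hπ, rfl⟩ := hx
    exact ⟨π, hπ, hxlt⟩
  choose π' hπ'sup hπ'cost using hseq
  -- kernel submodule
  set K : Submodule ℝ (Fin (D + 1) → ℝ) :=
    { carrier := {π | ∀ ω, ∑ d, π d * S d ω = 0}
      add_mem' := fun {a b} ha hb ω => by
        simp only [Pi.add_apply, add_mul, Finset.sum_add_distrib, ha ω, hb ω, add_zero]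
      zero_mem' := fun ω => by simp
      smul_mem' := fun t a ha ω => by
        simp only [Pi.smul_apply, smul_eq_mul, mul_assoc, ← Finset.mul_sum, ha ω, mul_zero] }
    with hK
  obtain ⟨W, hW⟩ := K.exists_isCompl
  -- decompose
  have hdec : ∀ n : ℕ, ∃ v : W,
      (∀ ω, (∑ d, (v : Fin (D + 1) → ℝ) d * S d ω) = ∑ d, π' n d * S d ω) := by
    intro n
    obtain ⟨u, v, huv, -⟩ := Submodule.existsUnique_add_of_isCompl hW (π' n)
    refine ⟨v, fun ω => ?_⟩
    have hu : ∀ ω, (∑ d, (u : Fin (D + 1) → ℝ) d * S d ω) = 0 := u.2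
    calc (∑ d, (v : Fin (D + 1) → ℝ) d * S d ω)
        = (∑ d, (u : Fin (D + 1) → ℝ) d * S d ω)
          + ∑ d, (v : Fin (D + 1) → ℝ) d * S d ω := by rw [hu ω, zero_add]
      _ = ∑ d, ((u : Fin (D + 1) → ℝ) d + (v : Fin (D + 1) → ℝ) d) * S d ω := by
          rw [← Finset.sum_add_distrib]; exact Finset.sum_congr rfl fun d _ => (add_mul _ _ _).symm
      _ = ∑ d, π' n d * S d ω := by
          refine Finset.sum_congr rfl fun d _ => ?_
          have : (u : Fin (D + 1) → ℝ) d + (v : Fin (D + 1) → ℝ) d = π' n d := by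
            rw [← Pi.add_apply, huv]
          rw [this]
  choose w hw using hdec
  -- costs agree with payoff integrals
  have hwsup : ∀ n, IsSuperhedge S H (w n : Fin (D + 1) → ℝ) := fun n ω => by
    rw [hw n ω]; exact hπ'sup n ω
  have hwcost : ∀ n, (∑ d, (w n : Fin (D + 1) → ℝ) d * f d) = ∑ d, π' n d * f d := by
    intro n
    rw [aux_cost_eq f S P hmm, aux_cost_eq f S P hmm]
    exact integral_congr_ae (Filter.Eventually.of_forall fun ω => hw n ω)
  have hwlow : ∀ n, c ≤ ∑ d, (w n : Fin (D + 1) → ℝ) d * f d := fun n => by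
    rw [hwcost n]; exact hlb _ ⟨π' n, hπ'sup n, rfl⟩
  have hwhigh : ∀ n : ℕ, (∑ d, (w n : Fin (D + 1) → ℝ) d * f d) < c + 1 / (n + 1) := fun n => by
    rw [hwcost n]; exact hπ'cost n
  set N : W → ℝ := fun v => ∫ ω, |∑ d, (v : Fin (D + 1) → ℝ) d * S d ω| ∂P with hN
  set C : ℝ := ∑ d, ‖S d‖ with hCdef
  have hCnn : 0 ≤ C := Finset.sum_nonneg fun d _ => norm_nonneg _
  have habs_int : ∀ π : Fin (D + 1) → ℝ, Integrable (fun ω => |∑ d, π d * S d ω|) P :=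
    fun π => (aux_payoff_integrable S P π).abs
  have hbound : ∀ (π : Fin (D + 1) → ℝ) (ω : Ω), |∑ d, π d * S d ω| ≤ C * ‖π‖ := by
    intro π ω
    calc |∑ d, π d * S d ω| ≤ ∑ d, |π d * S d ω| := Finset.abs_sum_le_sum_abs _ _
      _ ≤ ∑ d, ‖S d‖ * ‖π‖ := by
          refine Finset.sum_le_sum fun d _ => ?_
          rw [abs_mul]
          have h1 : |π d| ≤ ‖π‖ := by
            simpa [Real.norm_eq_abs] using norm_le_pi_norm π d
          have h2 : |S d ω| ≤ ‖S d‖ := by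
            simpa [Real.norm_eq_abs] using (S d).norm_coe_le_norm ω
          calc |π d| * |S d ω| ≤ ‖π‖ * ‖S d‖ :=
                mul_le_mul h1 h2 (abs_nonneg _) (norm_nonneg _)
            _ = ‖S d‖ * ‖π‖ := mul_comm _ _
      _ = C * ‖π‖ := by rw [hCdef, Finset.sum_mul]
  have hsubpay : ∀ (u v : W) (ω : Ω),
      (∑ d, ((u - v : W) : Fin (D + 1) → ℝ) d * S d ω)
        = (∑ d, (u : Fin (D + 1) → ℝ) d * S d ω) - ∑ d, (v : Fin (D + 1) → ℝ) d * S d ω := by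
    intro u v ω
    rw [← Finset.sum_sub_distrib]
    refine Finset.sum_congr rfl fun d _ => ?_
    simp [sub_mul]
  have hNdiff : ∀ u v : W, N u - N v ≤ C * ‖u - v‖ := by
    intro u v
    have h1 : N u - N v ≤ ∫ ω, |∑ d, ((u - v : W) : Fin (D + 1) → ℝ) d * S d ω| ∂P := by
      rw [hN]
      simp only
      rw [← integral_sub (habs_int _) (habs_int _)]
      refine integral_mono ((habs_int _).sub (habs_int _)) (habs_int _) fun ω => ?_
      simp only [Pi.sub_apply]
      rw [hsubpay u v ω]
      exact abs_sub_abs_le_abs_sub _ _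
    refine h1.trans ?_
    calc (∫ ω, |∑ d, ((u - v : W) : Fin (D + 1) → ℝ) d * S d ω| ∂P)
        ≤ ∫ _ω, C * ‖((u - v : W) : Fin (D + 1) → ℝ)‖ ∂P :=
          integral_mono (habs_int _) (integrable_const _) fun ω => hbound _ ω
      _ = C * ‖u - v‖ := by
          rw [integral_const]
          simp
  have hNcont : Continuous N := by
    have hNlip : LipschitzWith (Real.toNNReal C) N := by
      refine LipschitzWith.of_dist_le_mul fun u v => ?_
      rw [Real.dist_eq, Real.coe_toNNReal _ hCnn, dist_eq_norm]
      refine abs_sub_le_iff.2 ⟨hNdiff u v, ?_⟩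
      rw [norm_sub_rev]
      exact hNdiff v u
    exact hNlip.continuous
  have hNsmul : ∀ (t : ℝ) (v : W), N (t • v) = |t| * N v := by
    intro t v
    have hpt : ∀ ω, |∑ d, ((t • v : W) : Fin (D + 1) → ℝ) d * S d ω|
        = |t| * |∑ d, (v : Fin (D + 1) → ℝ) d * S d ω| := by
      intro ω
      have : (∑ d, ((t • v : W) : Fin (D + 1) → ℝ) d * S d ω)
          = t * ∑ d, (v : Fin (D + 1) → ℝ) d * S d ω := by
        rw [Finset.mul_sum]
        refine Finset.sum_congr rfl fun d _ => ?_
        simp [mul_assoc]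
      rw [this, abs_mul]
    rw [hN]
    simp only
    rw [integral_congr_ae (Filter.Eventually.of_forall hpt)]
    exact integral_const_mul _ _
  have hNnonneg : ∀ v : W, 0 ≤ N v := fun v => integral_nonneg fun ω => abs_nonneg _
  have hNpos : ∀ v : W, v ≠ 0 → 0 < N v := by
    intro v hv
    rcases lt_or_eq_of_le (hNnonneg v) with h | h
    · exact h
    · exfalso
      have hzero := aux_zero P hfs
        ⟨fun ω => |∑ d, (v : Fin (D + 1) → ℝ) d * S d ω|, (aux_payoff_cont S _).abs⟩
        (fun ω => abs_nonneg _) h.symm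
      have hmemK : (v : Fin (D + 1) → ℝ) ∈ K := by
        intro ω
        exact abs_eq_zero.1 (hzero ω)
      have hv0 : (v : Fin (D + 1) → ℝ) = 0 :=
        Submodule.disjoint_def.mp hW.disjoint _ hmemK v.2
      exact hv (Subtype.ext hv0)
  by_cases hWtriv : ∀ v : W, v = 0
  · apply hnr
    refine ⟨0, fun ω => ?_⟩
    have h1 : (∑ d, π' 0 d * S d ω) = 0 := by
      rw [← hw 0 ω, hWtriv (w 0)]
      simp
    have h2 := hπ'sup 0 ω
    have h3 := hH ω
    rw [h1] at h2
    simp only [Pi.zero_apply, zero_mul, Finset.sum_const_zero]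
    linarith
  push_neg at hWtriv
  obtain ⟨v0, hv0⟩ := hWtriv
  haveI : ProperSpace W := FiniteDimensional.proper ℝ W
  have hsph : (Metric.sphere (0 : W) 1).Nonempty := by
    refine ⟨‖v0‖⁻¹ • v0, ?_⟩
    have hns := norm_smul (‖v0‖⁻¹) v0
    rw [mem_sphere_zero_iff_norm, hns, Real.norm_eq_abs, abs_inv, abs_norm]
    exact inv_mul_cancel₀ (norm_ne_zero_iff.2 hv0)
  obtain ⟨v1, hv1mem, hv1min⟩ :=
    (isCompact_sphere (0 : W) 1).exists_isMinOn hsph hNcont.continuousOn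
  have hv1ne : v1 ≠ 0 := by
    intro h
    rw [mem_sphere_zero_iff_norm, h, norm_zero] at hv1mem
    norm_num at hv1mem
  have hmpos : 0 < N v1 := hNpos v1 hv1ne
  have hlow : ∀ v : W, N v1 * ‖v‖ ≤ N v := by
    intro v
    by_cases hv : v = 0
    · rw [hv, norm_zero, mul_zero]
      exact hNnonneg 0
    · have hvn : ‖v‖ ≠ 0 := norm_ne_zero_iff.2 hv
      have hmem : ‖v‖⁻¹ • v ∈ Metric.sphere (0 : W) 1 := by
        have hns := norm_smul (‖v‖⁻¹) v
        rw [mem_sphere_zero_iff_norm, hns, Real.norm_eq_abs, abs_inv, abs_norm]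
        exact inv_mul_cancel₀ hvn
      have hle : N v1 ≤ N (‖v‖⁻¹ • v) := hv1min hmem
      rw [hNsmul, abs_inv, abs_norm] at hle
      have h2 : ‖v‖ * N v1 ≤ ‖v‖ * (‖v‖⁻¹ * N v) :=
        mul_le_mul_of_nonneg_left hle (norm_nonneg v)
      calc N v1 * ‖v‖ = ‖v‖ * N v1 := mul_comm _ _
        _ ≤ ‖v‖ * (‖v‖⁻¹ * N v) := h2
        _ = N v := by rw [← mul_assoc, mul_inv_cancel₀ hvn, one_mul]
  have hmemball : ∀ n, w n ∈ Metric.closedBall (0 : W) ((c + 1) / N v1) := by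
    intro n
    rw [Metric.mem_closedBall, dist_zero_right]
    have heqN : N (w n) = ∑ d, (w n : Fin (D + 1) → ℝ) d * f d := by
      rw [aux_cost_eq f S P hmm]
      refine integral_congr_ae (Filter.Eventually.of_forall fun ω => ?_)
      exact abs_of_nonneg (le_trans (hH ω) (hwsup n ω))
    have h2 : (1 : ℝ) / (n + 1) ≤ 1 := by
      rw [div_le_one (by positivity)]
      have : (0:ℝ) ≤ (n:ℝ) := Nat.cast_nonneg n
      linarith
    have h1 : N (w n) ≤ c + 1 := by
      have := hwhigh n
      rw [heqN]
      linarith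
    rw [le_div_iff₀ hmpos]
    nlinarith [hlow (w n)]
  obtain ⟨a, -, φ, hφ, hconv⟩ :=
    tendsto_subseq_of_bounded Metric.isBounded_closedBall hmemball
  have hcoecont : ∀ g : Fin (D + 1) → ℝ, Continuous fun v : W => ∑ d, (v : Fin (D + 1) → ℝ) d * g d :=
    fun g => continuous_finset_sum _ fun d _ =>
      ((continuous_apply d).comp continuous_subtype_val).mul continuous_const
  have hasup : IsSuperhedge S H (a : Fin (D + 1) → ℝ) := by
    intro ω
    have hc1 : Continuous fun v : W => ∑ d, (v : Fin (D + 1) → ℝ) d * S d ω :=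
      continuous_finset_sum _ fun d _ =>
        ((continuous_apply d).comp continuous_subtype_val).mul continuous_const
    have ht : Tendsto (fun n => ∑ d, ((w (φ n)) : Fin (D + 1) → ℝ) d * S d ω) atTop
        (𝓝 (∑ d, (a : Fin (D + 1) → ℝ) d * S d ω)) :=
      (hc1.continuousAt.tendsto.comp hconv)
    exact ge_of_tendsto' ht fun n => hwsup (φ n) ω
  have htc : Tendsto (fun n => ∑ d, ((w (φ n)) : Fin (D + 1) → ℝ) d * f d) atTop
      (𝓝 (∑ d, (a : Fin (D + 1) → ℝ) d * f d)) :=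
    ((hcoecont f).continuousAt.tendsto.comp hconv)
  have htc' : Tendsto (fun n => ∑ d, ((w (φ n)) : Fin (D + 1) → ℝ) d * f d) atTop (𝓝 c) := by
    refine tendsto_of_tendsto_of_tendsto_of_le_of_le (g := fun _ => c)
      (h := fun n : ℕ => c + 1 / (φ n + 1)) tendsto_const_nhds ?_
      (fun n => hwlow _) (fun n => (hwhigh (φ n)).le)
    have h1 : Tendsto (fun n : ℕ => (1 : ℝ) / (φ n + 1)) atTop (𝓝 0) :=
      tendsto_one_div_add_atTop_nhds_zero_nat.comp hφ.tendsto_atTop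
    simpa using tendsto_const_nhds.add h1
  have hacost : (∑ d, (a : Fin (D + 1) → ℝ) d * f d) = c := tendsto_nhds_unique htc htc'
  exact hnr ⟨a, aux_part1 f S H _ P hasup hmm hfs (by rw [hacost, hc])⟩

end MyAux


/-- a superhedge whose cost equals the expected claim under a full support
martingale measure replicates the claim; consequently, if the claim is not replicable, the
superhedging value is not attained by any full support martingale measure. -/
theorem superhedge_attained_implies_replication
    [MetricSpace Ω] [Nonempty Ω] [CompactSpace Ω] [TopologicalSpace.SeparableSpace Ω]
    [CompleteSpace Ω] [MeasurableSpace Ω] [BorelSpace Ω] {D : ℕ} (f : Fin (D + 1) → ℝ) (S : Fin (D + 1) → C(Ω, ℝ))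
    (hf : ∀ d, 0 ≤ f d) (hS : ∀ d ω, 0 ≤ S d ω)
    (hS0 : ∀ ω, S 0 ω = 1) (hf0 : f 0 = 1)
    (H : C(Ω, ℝ)) (hH : ∀ ω, 0 ≤ H ω) :
    (∀ (π : Fin (D + 1) → ℝ) (P : Measure Ω), IsSuperhedge S H π →
      IsMartingaleMeasure f S P → HasFullSupport P →
      (∑ d, π d * f d) = (∫ ω, H ω ∂P) →
      ∀ ω, (∑ d, π d * S d ω) = H ω) ∧
    ((¬ ∃ π : Fin (D + 1) → ℝ, ∀ ω, (∑ d, π d * S d ω) = H ω) →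
      ¬ ∃ P : Measure Ω, IsMartingaleMeasure f S P ∧ HasFullSupport P ∧
        (∫ ω, H ω ∂P) =
          sInf {x : ℝ | ∃ π : Fin (D + 1) → ℝ, IsSuperhedge S H π ∧ x = ∑ d, π d * f d}) := by
  refine ⟨fun π P hsup hmm hfs heq => aux_part1 f S H π P hsup hmm hfs heq, ?_⟩
  intro hnr
  exact aux_part2 f S H hH hS0 hf0 hnr
end
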